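/- arXiv:1909.04519 — 2 statements merged into one kernel-verified Lean document; each statement's English description precedes it below -/
import Mathlib

section
/- Every unit quaternion q (|q| = 1) can be written as q = exp(i φ)·exp(k ψ)·exp(j θ) for some real angles φ ∈ [-π, π), ψ ∈ [-π/2, π/2), θ ∈ [-π/4, π/4]. -/
open Quaternion

/-- The imaginary unit `i` of the quaternions. -/
def qI : ℍ[ℝ] := ⟨0, 1, 0, 0⟩

/-- The imaginary unit `j` of the quaternions. -/
def qJ : ℍ[ℝ] := ⟨0, 0, 1, 0⟩

/-- The imaginary unit `k` of the quaternions. -/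
def qK : ℍ[ℝ] := ⟨0, 0, 0, 1⟩

lemma norm_eq_sqrt' (q : ℍ[ℝ]) : ‖q‖ = Real.sqrt (q.re^2 + q.imI^2 + q.imJ^2 + q.imK^2) := by
  have h := Quaternion.normSq_eq_norm_mul_self q
  have h2 : Quaternion.normSq q = q.re^2 + q.imI^2 + q.imJ^2 + q.imK^2 := by
    rw [Quaternion.normSq_def']
  rw [← h2, h, Real.sqrt_mul_self (norm_nonneg q)]

lemma sin_abs_div_abs (t : ℝ) : Real.sin |t| / |t| = Real.sin t / t := by
  rcases abs_cases t with ⟨h, _⟩ | ⟨h, _⟩ <;> rw [h]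
  rw [Real.sin_neg, neg_div_neg_eq]

lemma exp_unit (u : ℍ[ℝ]) (hre : u.re = 0) (hn : ‖u‖ = 1) (t : ℝ) :
    NormedSpace.exp (t • u) = (Real.cos t : ℍ[ℝ]) + Real.sin t • u := by
  have hre' : (t • u).re = 0 := by simp [hre]
  have hn' : ‖t • u‖ = |t| := by rw [norm_smul, hn, Real.norm_eq_abs, mul_one]
  rw [Quaternion.exp_of_re_eq_zero _ hre', hn', Real.cos_abs]
  rcases eq_or_ne t 0 with rfl | ht
  · simp
  · rw [sin_abs_div_abs t, smul_smul, div_mul_cancel₀ _ ht]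

lemma expI (t : ℝ) : NormedSpace.exp (t • qI) = (⟨Real.cos t, Real.sin t, 0, 0⟩ : ℍ[ℝ]) := by
  rw [exp_unit qI rfl (by rw [norm_eq_sqrt']; norm_num [qI]) t]
  ext <;> simp [Quaternion.re_smul, Quaternion.imI_smul, Quaternion.imJ_smul, Quaternion.imK_smul] <;> simp [qI]

lemma expJ (t : ℝ) : NormedSpace.exp (t • qJ) = (⟨Real.cos t, 0, Real.sin t, 0⟩ : ℍ[ℝ]) := by
  rw [exp_unit qJ rfl (by rw [norm_eq_sqrt']; norm_num [qJ]) t]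
  ext <;> simp [Quaternion.re_smul, Quaternion.imI_smul, Quaternion.imJ_smul, Quaternion.imK_smul] <;> simp [qJ]

lemma expK (t : ℝ) : NormedSpace.exp (t • qK) = (⟨Real.cos t, 0, 0, Real.sin t⟩ : ℍ[ℝ]) := by
  rw [exp_unit qK rfl (by rw [norm_eq_sqrt']; norm_num [qK]) t]
  ext <;> simp [Quaternion.re_smul, Quaternion.imI_smul, Quaternion.imJ_smul, Quaternion.imK_smul] <;> simp [qK]

lemma exists_angle (c s : ℝ) (h : c^2 + s^2 = 1) :
    ∃ φ ∈ Set.Ico (-Real.pi) Real.pi, Real.cos φ = c ∧ Real.sin φ = s := by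
  set zc : ℂ := ⟨c, s⟩ with hzc
  have habs : ‖zc‖ = 1 := by
    rw [Complex.norm_def, Complex.normSq_apply]
    simp only [hzc]
    rw [show c * c + s * s = 1 by nlinarith]
    exact Real.sqrt_one
  have hz0 : zc ≠ 0 := by
    intro h0; rw [h0] at habs; simp at habs
  have hcos : Real.cos zc.arg = c := by
    rw [Complex.cos_arg hz0, habs]; simp [hzc]
  have hsin : Real.sin zc.arg = s := by
    rw [Complex.sin_arg, habs]; simp [hzc]
  rcases lt_or_eq_of_le (Complex.arg_le_pi zc) with hlt | heq
  · exact ⟨zc.arg, ⟨le_of_lt (Complex.neg_pi_lt_arg zc), hlt⟩, hcos, hsin⟩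
  · refine ⟨-Real.pi, ⟨le_refl _, by linarith [Real.pi_pos]⟩, ?_, ?_⟩
    · rw [Real.cos_neg, ← heq, hcos]
    · rw [Real.sin_neg, ← heq, hsin]; simp [← hsin, heq]

lemma stageB (W X Y Z : ℝ) (hsum : W^2+X^2+Y^2+Z^2 = 1) (horto : W*Y+X*Z = 0) :
    ∃ φ ∈ Set.Ico (-Real.pi) Real.pi, ∃ ψ ∈ Set.Ico (-(Real.pi/2)) (Real.pi/2),
      Real.cos φ * Real.cos ψ = W ∧ Real.sin φ * Real.cos ψ = X ∧
      -(Real.sin φ * Real.sin ψ) = Y ∧ Real.cos φ * Real.sin ψ = Z := by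
  rcases eq_or_lt_of_le (show (0:ℝ) ≤ W^2 + X^2 by positivity) with hu0 | hupos
  · -- W = X = 0
    have hW : W = 0 := by nlinarith [sq_nonneg W, sq_nonneg X]
    have hX : X = 0 := by nlinarith [sq_nonneg W, sq_nonneg X]
    obtain ⟨φ, hφ, hc, hs⟩ := exists_angle (-Z) Y (by nlinarith)
    refine ⟨φ, hφ, -(Real.pi/2), ⟨le_refl _, by linarith [Real.pi_pos]⟩, ?_, ?_, ?_, ?_⟩ <;>
      simp [Real.cos_neg, Real.sin_neg, hc, hs, hW, hX] <;> linarith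
  · -- W^2 + X^2 > 0
    have hrpos : 0 < Real.sqrt (W^2+X^2) := Real.sqrt_pos.mpr hupos
    set r := Real.sqrt (W^2+X^2) with hr
    have hr2 : r^2 = W^2+X^2 := Real.sq_sqrt (le_of_lt hupos)
    have hrne : r ≠ 0 := ne_of_gt hrpos
    obtain ⟨φ, hφ, hc, hs⟩ := exists_angle (W/r) (X/r) (by field_simp; linarith [hr2])
    have key : (Z*W - X*Y)^2 = (W^2+X^2) * (Y^2+Z^2) := by
      linear_combination (-(W*Y+X*Z)) * horto
    have hT2 : ((Z*W - X*Y)/r)^2 = Y^2+Z^2 := by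
      rw [div_pow, hr2]
      field_simp
      linear_combination key
    have hT2' : ((Z*W - X*Y)/r)^2 = 1 - (W^2+X^2) := by rw [hT2]; linarith
    have hTle : ((Z*W - X*Y)/r) ≤ 1 := by nlinarith [hT2']
    have hTge : (-1:ℝ) ≤ ((Z*W - X*Y)/r) := by nlinarith [hT2']
    have hTlt : ((Z*W - X*Y)/r) < 1 := by
      rcases lt_or_eq_of_le hTle with h | h
      · exact h
      · exfalso; rw [h] at hT2'; nlinarith
    refine ⟨φ, hφ, Real.arcsin ((Z*W - X*Y)/r), ⟨?_, ?_⟩, ?_, ?_, ?_, ?_⟩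
    · exact Real.neg_pi_div_two_le_arcsin _
    · exact Real.arcsin_lt_pi_div_two.mpr hTlt
    · rw [hc, Real.cos_arcsin, hT2', show (1:ℝ) - (1 - (W^2+X^2)) = W^2+X^2 by ring, ← hr]
      exact div_mul_cancel₀ _ hrne
    · rw [hs, Real.cos_arcsin, hT2', show (1:ℝ) - (1 - (W^2+X^2)) = W^2+X^2 by ring, ← hr]
      exact div_mul_cancel₀ _ hrne
    · rw [hs, Real.sin_arcsin hTge hTle, div_mul_div_comm, ← sq, hr2,
        (div_eq_iff (ne_of_gt hupos)).mpr
          (show X*(Z*W-X*Y) = -Y*(W^2+X^2) by linear_combination W*horto)]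
      ring
    · rw [hc, Real.sin_arcsin hTge hTle, div_mul_div_comm, ← sq, hr2,
        (div_eq_iff (ne_of_gt hupos)).mpr
          (show W*(Z*W-X*Y) = Z*(W^2+X^2) by linear_combination (-X)*horto)]

lemma stageA (w x y z : ℝ) :
    ∃ θ ∈ Set.Icc (-(Real.pi/4)) (Real.pi/4),
      (w*y + x*z) * (Real.cos θ^2 - Real.sin θ^2)
        = Real.cos θ * Real.sin θ * (w^2+x^2-y^2-z^2) := by
  set A := 2*(w*y + x*z) with hA
  set B := w^2+x^2-y^2-z^2 with hB
  rcases eq_or_ne B 0 with hB0 | hB0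
  · refine ⟨Real.pi/4, ⟨by linarith [Real.pi_pos], le_refl _⟩, ?_⟩
    rw [hB0, Real.cos_pi_div_four, Real.sin_pi_div_four]
    ring
  · refine ⟨Real.arctan (A/B) / 2, ⟨?_, ?_⟩, ?_⟩
    · linarith [Real.neg_pi_div_two_lt_arctan (A/B)]
    · linarith [Real.arctan_lt_pi_div_two (A/B)]
    · have hcos2 : Real.cos (Real.arctan (A/B) / 2)^2 - Real.sin (Real.arctan (A/B) / 2)^2
          = Real.cos (Real.arctan (A/B)) := by
        have h2 := Real.cos_two_mul (Real.arctan (A/B) / 2)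
        rw [show 2 * (Real.arctan (A/B) / 2) = Real.arctan (A/B) by ring] at h2
        have := Real.sin_sq_add_cos_sq (Real.arctan (A/B) / 2)
        linarith
      have hsin2 : 2 * (Real.cos (Real.arctan (A/B) / 2) * Real.sin (Real.arctan (A/B) / 2))
          = Real.sin (Real.arctan (A/B)) := by
        have h2 := Real.sin_two_mul (Real.arctan (A/B) / 2)
        rw [show 2 * (Real.arctan (A/B) / 2) = Real.arctan (A/B) by ring] at h2
        rw [h2]; ring
      have h1 : (w*y+x*z) = A/2 := by rw [hA]; ring
      rw [h1, hcos2]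
      have : Real.cos (Real.arctan (A/B) / 2) * Real.sin (Real.arctan (A/B) / 2)
          = Real.sin (Real.arctan (A/B)) / 2 := by linarith
      rw [this, Real.cos_arctan, Real.sin_arctan]
      have hs : Real.sqrt (1 + (A/B)^2) ≠ 0 := by positivity
      field_simp

/-- Bülow's polar decomposition: every unit quaternion factors as
`exp(i φ) exp(k ψ) exp(j θ)` with angles in the indicated ranges. -/
theorem unit_quaternion_euler_decomposition (q : ℍ[ℝ]) (hq : ‖q‖ = 1) :
    ∃ φ ψ θ : ℝ,
      φ ∈ Set.Ico (-Real.pi) Real.pi ∧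
      ψ ∈ Set.Ico (-(Real.pi / 2)) (Real.pi / 2) ∧
      θ ∈ Set.Icc (-(Real.pi / 4)) (Real.pi / 4) ∧
      q = NormedSpace.exp (φ • qI) * NormedSpace.exp (ψ • qK) *
            NormedSpace.exp (θ • qJ) := by
  set w := q.re with hw
  set x := q.imI with hx
  set y := q.imJ with hy
  set z := q.imK with hz
  have hsum : w^2 + x^2 + y^2 + z^2 = 1 := by
    have h := norm_eq_sqrt' q
    rw [hq] at h
    have h2 : Real.sqrt (w^2+x^2+y^2+z^2) = 1 := h.symm
    have := Real.sq_sqrt (show (0:ℝ) ≤ w^2+x^2+y^2+z^2 by positivity)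
    rw [h2] at this
    linarith
  obtain ⟨θ, hθmem, hθcond⟩ := stageA w x y z
  set cθ := Real.cos θ with hcθ
  set sθ := Real.sin θ with hsθ
  have hpθ : cθ^2 + sθ^2 = 1 := by
    rw [hcθ, hsθ]; linarith [Real.sin_sq_add_cos_sq θ]
  have hWsum : (w*cθ + y*sθ)^2 + (x*cθ + z*sθ)^2 + (y*cθ - w*sθ)^2 + (z*cθ - x*sθ)^2 = 1 := by
    linear_combination (w^2+x^2+y^2+z^2) * hpθ + hsum
  have hWorto : (w*cθ + y*sθ)*(y*cθ - w*sθ) + (x*cθ + z*sθ)*(z*cθ - x*sθ) = 0 := by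
    linear_combination hθcond
  obtain ⟨φ, hφmem, ψ, hψmem, hW, hX, hY, hZ⟩ := stageB _ _ _ _ hWsum hWorto
  refine ⟨φ, ψ, θ, hφmem, hψmem, hθmem, ?_⟩
  rw [expI, expK, expJ]
  ext
  · show w = _
    erw [Quaternion.re_mul, Quaternion.re_mul, Quaternion.imI_mul, Quaternion.imJ_mul, Quaternion.imK_mul]
    linear_combination (-cθ) * hW + sθ * hY - w * hpθ
  · show x = _
    erw [Quaternion.imI_mul, Quaternion.re_mul, Quaternion.imI_mul, Quaternion.imJ_mul, Quaternion.imK_mul]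
    linear_combination (-cθ) * hX + sθ * hZ - x * hpθ
  · show y = _
    erw [Quaternion.imJ_mul, Quaternion.re_mul, Quaternion.imI_mul, Quaternion.imJ_mul, Quaternion.imK_mul]
    linear_combination (-sθ) * hW - cθ * hY - y * hpθ
  · show z = _
    erw [Quaternion.imK_mul, Quaternion.re_mul, Quaternion.imI_mul, Quaternion.imJ_mul, Quaternion.imK_mul]
    linear_combination (-sθ) * hX - cθ * hZ - z * hpθ
end

section
/- For any octonion o with imaginary part v = Im o ≠ 0, exp(o) = exp(Re o)·(cos |v| + (v/|v|)·sin |v|), where exp is defined by the power series ∑ oᵏ/k! (which converges since powers of a single octonion lie in a commutative associative subalgebra isomorphic to ℂ or ℝ). -/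
noncomputable section

open Quaternion

/-- The octonions, constructed by Cayley–Dickson doubling of the quaternions:
pairs of quaternions with multiplication `(a,b)(c,d) = (ac - d* b, da + b c*)`. -/
def Octonion : Type := ℍ[ℝ] × ℍ[ℝ]

namespace Octonion

instance : AddCommGroup Octonion := inferInstanceAs (AddCommGroup (ℍ[ℝ] × ℍ[ℝ]))
instance : Module ℝ Octonion := inferInstanceAs (Module ℝ (ℍ[ℝ] × ℍ[ℝ]))
instance : TopologicalSpace Octonion := inferInstanceAs (TopologicalSpace (ℍ[ℝ] × ℍ[ℝ]))

instance : One Octonion := ⟨((1 : ℍ[ℝ]), (0 : ℍ[ℝ]))⟩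

/-- Cayley–Dickson multiplication. -/
instance : Mul Octonion :=
  ⟨fun o p => (o.1 * p.1 - star p.2 * o.2, p.2 * o.1 + o.2 * star p.1)⟩

/-- Octonion conjugation: `(a, b)* = (a*, -b)`; it negates all imaginary coordinates. -/
def conj (o : Octonion) : Octonion := (star o.1, -o.2)

/-- The real part of an octonion (coefficient of `1`). -/
def re (o : Octonion) : ℝ := o.1.re

/-- The imaginary part of an octonion: `Im o = o - Re o`. -/
def im (o : Octonion) : Octonion := o - re o • (1 : Octonion)

/-- The Euclidean norm of an octonion. -/
noncomputable def norm (o : Octonion) : ℝ := Real.sqrt (‖o.1‖ ^ 2 + ‖o.2‖ ^ 2)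

/-- Left-nested powers of an octonion. -/
def pow (o : Octonion) : ℕ → Octonion
  | 0 => 1
  | n + 1 => o * pow o n

/-- The octonion exponential, defined by the power series `∑ oᵏ/k!`. -/
noncomputable def exp (o : Octonion) : Octonion :=
  ∑' k : ℕ, ((k.factorial : ℝ)⁻¹) • pow o k

/-- The imaginary unit `e₄`. -/
def e4 : Octonion := ((0 : ℍ[ℝ]), (1 : ℍ[ℝ]))

/-- The imaginary unit `e₅`. -/
def e5 : Octonion := ((0 : ℍ[ℝ]), (⟨0, 1, 0, 0⟩ : ℍ[ℝ]))

/-- The imaginary unit `e₆`. -/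
def e6 : Octonion := ((0 : ℍ[ℝ]), (⟨0, 0, 1, 0⟩ : ℍ[ℝ]))

/-- The imaginary unit `e₇`. -/
def e7 : Octonion := ((0 : ℍ[ℝ]), (⟨0, 0, 0, 1⟩ : ℍ[ℝ]))

end Octonion

namespace Octonion

instance : IsTopologicalAddGroup Octonion := inferInstanceAs (IsTopologicalAddGroup (ℍ[ℝ] × ℍ[ℝ]))
instance : ContinuousSMul ℝ Octonion := inferInstanceAs (ContinuousSMul ℝ (ℍ[ℝ] × ℍ[ℝ]))
instance : T2Space Octonion := inferInstanceAs (T2Space (ℍ[ℝ] × ℍ[ℝ]))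

lemma mul_def' (o p : Octonion) :
    o * p = (o.1 * p.1 - star p.2 * o.2, p.2 * o.1 + o.2 * star p.1) := rfl

lemma one_def' : (1 : Octonion) = ((1 : ℍ[ℝ]), (0 : ℍ[ℝ])) := rfl

lemma smul_def' (x : ℝ) (o : Octonion) : x • o = (x • o.1, x • o.2) := rfl

lemma omul_one (o : Octonion) : o * 1 = o := by
  show ((_ : ℍ[ℝ] × ℍ[ℝ]) : Octonion) = o
  simp only [mul_def']; simp [one_def']; rfl

lemma one_omul (o : Octonion) : (1 : Octonion) * o = o := by
  show ((_ : ℍ[ℝ] × ℍ[ℝ]) : Octonion) = o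
  simp only [mul_def']; simp [one_def']; rfl

lemma smul_omul (x : ℝ) (o p : Octonion) : (x • o) * p = x • (o * p) := by
  show ((_ : ℍ[ℝ] × ℍ[ℝ]) : Octonion) = _
  rw [smul_def' x (o * p)]; simp only [mul_def']; simp [smul_def', smul_sub, smul_add, smul_mul_assoc, mul_smul_comm]

lemma omul_smul (x : ℝ) (o p : Octonion) : o * (x • p) = x • (o * p) := by
  show ((_ : ℍ[ℝ] × ℍ[ℝ]) : Octonion) = _
  rw [smul_def' x (o * p)]; simp only [mul_def']; simp [smul_def', smul_sub, smul_add, smul_mul_assoc, mul_smul_comm]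

lemma add_def' (o p : Octonion) : o + p = (o.1 + p.1, o.2 + p.2) := rfl

lemma add_omul (o p q : Octonion) : (o + p) * q = o * q + p * q := by
  show ((_ : ℍ[ℝ] × ℍ[ℝ]) : Octonion) = ((_ : ℍ[ℝ] × ℍ[ℝ]) : Octonion)
  rw [add_def' (o * q) (p * q), mul_def' (o + p) q]
  simp only [mul_def', add_def', Prod.mk.injEq, star_add]
  constructor <;> noncomm_ring

lemma omul_add (o p q : Octonion) : o * (p + q) = o * p + o * q := by
  show ((_ : ℍ[ℝ] × ℍ[ℝ]) : Octonion) = ((_ : ℍ[ℝ] × ℍ[ℝ]) : Octonion)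
  rw [add_def' (o * p) (o * q), mul_def' o (p + q)]
  simp only [mul_def', add_def', Prod.mk.injEq, star_add]
  constructor <;> noncomm_ring

lemma norm_sq_eq (o : Octonion) : norm o ^ 2 = ‖o.1‖ ^ 2 + ‖o.2‖ ^ 2 :=
  Real.sq_sqrt (by positivity)

lemma mul_self_of_re_zero (v : Octonion) (h : v.1.re = 0) :
    v * v = (-(norm v ^ 2)) • 1 := by
  have hstar : star v.1 = -v.1 := by ext <;> simp [h]
  have h1 : v.1 * v.1 = -(v.1 * star v.1) := by
    rw [hstar, mul_neg, neg_neg]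
  show ((_ : ℍ[ℝ] × ℍ[ℝ]) : Octonion) = _
  rw [mul_def', smul_def']
  refine Prod.ext ?_ ?_
  · show v.1 * v.1 - star v.2 * v.2 = (-(norm v ^ 2)) • (1 : ℍ[ℝ])
    rw [h1, Quaternion.self_mul_star, Quaternion.star_mul_self, norm_sq_eq]
    ext <;> simp [Quaternion.normSq_eq_norm_mul_self, sq] <;> ring
  · show v.2 * v.1 + v.2 * star v.1 = (-(norm v ^ 2)) • (0 : ℍ[ℝ])
    rw [hstar]; simp


end Octonion

namespace Octonion

noncomputable def cmap (u : Octonion) : ℂ →L[ℝ] Octonion :=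
  LinearMap.toContinuousLinearMap
    { toFun := fun z => z.re • (1 : Octonion) + z.im • u
      map_add' := fun z w => by
        simp only [Complex.add_re, Complex.add_im, add_smul]; abel
      map_smul' := fun x z => by
        simp only [Complex.smul_re, Complex.smul_im, RingHom.id_apply, smul_add, mul_smul, smul_eq_mul] }

lemma cmap_apply (u : Octonion) (z : ℂ) : cmap u z = z.re • (1 : Octonion) + z.im • u := rfl

lemma cmap_mul (u : Octonion) (hu : u * u = -1) (z w : ℂ) :
    cmap u z * cmap u w = cmap u (z * w) := by
  simp only [cmap_apply, add_omul, omul_add, smul_omul, omul_smul, one_omul, omul_one, hu,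
    Complex.mul_re, Complex.mul_im, smul_smul]
  module

end Octonion

/-- For an octonion with nonzero imaginary part `v`,
`exp o = exp(Re o) (cos |v| + (v/|v|) sin |v|)`. -/
theorem octonion_exp_eq (o : Octonion) (hv : Octonion.im o ≠ 0) :
    Octonion.exp o =
      Real.exp (Octonion.re o) •
        (Real.cos (Octonion.norm (Octonion.im o)) • (1 : Octonion) +
          Real.sin (Octonion.norm (Octonion.im o)) •
            ((Octonion.norm (Octonion.im o))⁻¹ • Octonion.im o)) := by
  set v := Octonion.im o with hvdef
  set n := Octonion.norm v with hndef
  have hv1 : v.1 ≠ 0 ∨ v.2 ≠ 0 := by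
    by_contra h; push_neg at h; exact hv (Prod.ext h.1 h.2)
  have h2 : 0 < ‖v.1‖ ^ 2 + ‖v.2‖ ^ 2 := by
    rcases hv1 with h | h
    · have h1 : 0 < ‖v.1‖ ^ 2 := pow_pos (norm_pos_iff.mpr h) 2
      have : (0:ℝ) ≤ ‖v.2‖ ^ 2 := by positivity
      linarith
    · have h1 : 0 < ‖v.2‖ ^ 2 := pow_pos (norm_pos_iff.mpr h) 2
      have : (0:ℝ) ≤ ‖v.1‖ ^ 2 := by positivity
      linarith
  have hn0 : 0 < n := Real.sqrt_pos.mpr h2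
  have hn : n ≠ 0 := ne_of_gt hn0
  have hre : v.1.re = 0 := by
    show (o.1 - (Octonion.re o • (1 : Octonion)).1).re = 0
    simp only [Octonion.smul_def']; simp [Octonion.re, Octonion.one_def']
  set u : Octonion := n⁻¹ • v with hudef
  have hvv := Octonion.mul_self_of_re_zero v hre
  have hu : u * u = -1 := by
    rw [← hndef] at hvv
    rw [hudef, Octonion.smul_omul, Octonion.omul_smul, hvv, smul_smul, smul_smul]
    have h3 : n⁻¹ * n⁻¹ * -n ^ 2 = -1 := by field_simp
    rw [h3, neg_smul, one_smul]
  set z : ℂ := ⟨Octonion.re o, n⟩ with hzdef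
  have o_eq : Octonion.cmap u z = o := by
    rw [Octonion.cmap_apply]
    show Octonion.re o • (1 : Octonion) + n • (n⁻¹ • v) = o
    rw [smul_smul, mul_inv_cancel₀ hn, one_smul, hvdef, Octonion.im]
    abel
  have pow_eq : ∀ k, Octonion.pow o k = Octonion.cmap u (z ^ k) := by
    intro k; induction k with
    | zero => simp [Octonion.pow, Octonion.cmap_apply]
    | succ k ih =>
        show o * Octonion.pow o k = _
        rw [ih, ← o_eq, Octonion.cmap_mul u hu, pow_succ, mul_comm]
  have hsum : Summable fun k : ℕ => ((k.factorial : ℝ)⁻¹) • z ^ k :=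
    NormedSpace.expSeries_summable' (𝕂 := ℝ) z
  have key : Octonion.exp o = Octonion.cmap u (Complex.exp z) := by
    rw [Octonion.exp]
    have : ∀ k : ℕ, ((k.factorial : ℝ)⁻¹) • Octonion.pow o k
        = Octonion.cmap u (((k.factorial : ℝ)⁻¹) • z ^ k) := by
      intro k; rw [pow_eq k, map_smul]
    rw [tsum_congr this, ← (Octonion.cmap u).map_tsum hsum]
    congr 1
    rw [Complex.exp_eq_exp_ℂ, NormedSpace.exp_eq_tsum (𝕂 := ℝ)]
  rw [key, Octonion.cmap_apply, Complex.exp_re, Complex.exp_im]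
  show (Real.exp (Octonion.re o) * Real.cos n) • (1 : Octonion)
      + (Real.exp (Octonion.re o) * Real.sin n) • u = _
  rw [hudef]
  module
end
end
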